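/- arXiv:math/0309045 — 3 statements merged into one kernel-verified Lean document; each statement's English description precedes it below -/
import Mathlib

section
/- Let B be a C*-algebra, let Y and Z be Hilbert C*-modules over B, and let J be a closed two-sided ideal of B that contains ⟨y|y'⟩ for all y, y' ∈ Y. If u : Y → Z is a bounded ℂ-linear map satisfying u(y·j) = u(y)·j for all y ∈ Y and j ∈ J, then u(y·b) = u(y)·b for all y ∈ Y and b ∈ B. Consequently the bounded B-module maps from Y to Z coincide with the bounded ℂ-linear maps from Y to Z that are J-module maps. -/
/-!
Equation (2.2) of the paper: if `Y`, `Z` are Hilbert C*-modules over a C*-algebra `B`, and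
`J` is a closed two-sided ideal of `B` containing all the inner products `⟨y | y'⟩` for
`y, y' ∈ Y`, then every bounded ℂ-linear `J`-module map `u : Y → Z` is automatically a
`B`-module map; consequently the bounded `B`-module maps from `Y` to `Z` coincide with the
bounded ℂ-linear `J`-module maps from `Y` to `Z`.
-/

open scoped InnerProductSpace RightActions

/-- The notion of Hilbert C⋆-module of the older Mathlib (`CStarModule` of December 2024):
a right `A`-module (action of `Aᵐᵒᵖ`) with an `A`-valued inner product, linear on the right. -/
class RightCStarModule (A E : Type*) [NonUnitalSemiring A] [StarRing A]
    [Module ℂ A] [AddCommGroup E] [Module ℂ E] [PartialOrder A] [SMul Aᵐᵒᵖ E] [Norm A] [Norm E]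
    extends Inner A E where
  inner_add_right {x} {y} {z} : inner x (y + z) = inner x y + inner x z
  inner_self_nonneg {x} : 0 ≤ inner x x
  inner_self {x} : inner x x = 0 ↔ x = 0
  inner_op_smul_right {a : A} {x y : E} : inner x (y <• a) = inner x y * a
  inner_smul_right_complex {z : ℂ} {x} {y} : inner x (z • y) = z • inner x y
  star_inner x y : star (inner x y) = inner y x
  norm_eq_sqrt_norm_inner_self x : ‖x‖ = √‖inner x x‖

attribute [simp] RightCStarModule.inner_add_right RightCStarModule.star_inner
attribute [simp] RightCStarModule.inner_op_smul_right RightCStarModule.inner_smul_right_complex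

namespace RightCStarModule

section general

variable {A E : Type*} [NonUnitalCStarAlgebra A] [PartialOrder A] [AddCommGroup E]
  [Module ℂ E] [SMul Aᵐᵒᵖ E] [Norm E] [RightCStarModule A E]

@[simp]
lemma inner_add_left {x y z : E} : inner A (x + y) z = inner A x z + inner A y z := by
  rw [← star_star (r := inner A (x + y) z)]
  simp only [inner_add_right, star_add, star_inner]

@[simp]
lemma inner_op_smul_left {a : A} {x y : E} : inner A (x <• a) y = star a * inner A x y := by
  rw [← star_inner]; simp

@[simp]
lemma inner_sub_right {x y z : E} : inner A x (y - z) = inner A x y - inner A x z := by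
  refine eq_sub_of_add_eq ?_
  rw [← inner_add_right, sub_add_cancel]

@[simp]
lemma inner_sub_left {x y z : E} : inner A (x - y) z = inner A x z - inner A y z := by
  refine eq_sub_of_add_eq ?_
  rw [← inner_add_left, sub_add_cancel]

@[simp]
lemma inner_zero_right {x : E} : inner A x (0 : E) = 0 := by
  simpa using (inner_sub_right (A := A) (x := x) (y := (0 : E)) (z := 0))

@[simp]
lemma inner_zero_left {x : E} : inner A (0 : E) x = 0 := by
  simpa using (inner_sub_left (A := A) (x := (0 : E)) (y := 0) (z := x))

lemma isSelfAdjoint_inner_self {x : E} : IsSelfAdjoint (inner A x x) := star_inner _ _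

lemma norm_sq_eq {x : E} : ‖x‖ ^ 2 = ‖inner A x x‖ := by
  rw [norm_eq_sqrt_norm_inner_self (A := A) x, Real.sq_sqrt (norm_nonneg _)]

end general

end RightCStarModule

section helpers

variable {B Y : Type*}
    [NonUnitalCStarAlgebra B] [PartialOrder B] [StarOrderedRing B]
    [NormedAddCommGroup Y] [NormedSpace ℂ Y] [SMul Bᵐᵒᵖ Y] [RightCStarModule B Y]

lemma hcm_eq_of_inner {z z' : Y} (h : ∀ w : Y, ⟪w, z⟫_B = ⟪w, z'⟫_B) : z = z' := by
  have h0 : ⟪z - z', z - z'⟫_B = 0 := by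
    rw [RightCStarModule.inner_sub_right, h (z - z'), sub_self]
  exact sub_eq_zero.mp (RightCStarModule.inner_self.mp h0)

lemma hcm_smul_mul (y : Y) (a b : B) : (y <• a) <• b = y <• (a * b) := by
  refine hcm_eq_of_inner (B := B) fun w => ?_
  simp only [RightCStarModule.inner_op_smul_right, mul_assoc]

lemma hcm_sub_smul (y y' : Y) (b : B) : (y - y') <• b = y <• b - y' <• b := by
  refine hcm_eq_of_inner (B := B) fun w => ?_
  simp [sub_mul]

lemma hcm_norm_smul_le (y : Y) (b : B) : ‖y <• b‖ ≤ ‖y‖ * ‖b‖ := by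
  rw [RightCStarModule.norm_eq_sqrt_norm_inner_self (A := B) (x := y <• b)]
  have h1 : ⟪y <• b, y <• b⟫_B = star b * (⟪y, y⟫_B * b) := by simp [mul_assoc]
  have h2 : ‖⟪y <• b, y <• b⟫_B‖ ≤ (‖y‖ * ‖b‖) ^ 2 := by
    rw [h1]
    calc ‖star b * (⟪y, y⟫_B * b)‖ ≤ ‖star b‖ * (‖⟪y, y⟫_B‖ * ‖b‖) :=
          (norm_mul_le _ _).trans (by gcongr; exact norm_mul_le _ _)
      _ = ‖⟪y, y⟫_B‖ * ‖b‖ ^ 2 := by rw [norm_star]; ring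
      _ ≤ (‖y‖ * ‖b‖) ^ 2 := by
          rw [← RightCStarModule.norm_sq_eq, mul_pow]
  calc Real.sqrt ‖⟪y <• b, y <• b⟫_B‖ ≤ Real.sqrt ((‖y‖ * ‖b‖) ^ 2) := Real.sqrt_le_sqrt h2
    _ = ‖y‖ * ‖b‖ := Real.sqrt_sq (by positivity)

lemma real_key {s t : ℝ} (hs : 0 < s) (ht : 0 ≤ t) :
    t * (s ^ 2 / (s ^ 2 + t ^ 2)) ^ 2 ≤ s / 2 := by
  rw [div_pow, ← mul_div_assoc, div_le_div_iff₀ (by positivity) (by norm_num)]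
  nlinarith [mul_nonneg (sq_nonneg s) (sq_nonneg (s - t)), mul_nonneg (sq_nonneg s) (sq_nonneg t),
    sq_nonneg t, sq_nonneg (t^2), mul_nonneg hs.le (sq_nonneg (s - t)), mul_nonneg hs.le (sq_nonneg t)]

lemma hcm_approx (J : TwoSidedIdeal B)
    (hJinner : ∀ y y' : Y, ⟪y, y'⟫_B ∈ J) (y : Y) {ε : ℝ} (hε : 0 < ε) :
    ∃ j ∈ J, ‖y - y <• j‖ < ε := by
  set a : B := ⟪y, y⟫_B with ha_def
  have ha : IsSelfAdjoint a := RightCStarModule.isSelfAdjoint_inner_self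
  have ha0 : (0 : B) ≤ a := RightCStarModule.inner_self_nonneg
  have haJ : a ∈ J := hJinner y y
  set s : ℝ := ε ^ 2 with hs_def
  have hs : 0 < s := by positivity
  set δ : ℝ := s ^ 2 with hδ_def
  have hδ : 0 < δ := by positivity
  have hden : ∀ t : ℝ, δ + t ^ 2 ≠ 0 := fun t => by positivity
  set f : ℝ → ℝ := fun t => t ^ 2 / (δ + t ^ 2) with hf_def
  set g : ℝ → ℝ := fun t => t / (δ + t ^ 2) with hg_def
  have hfc : Continuous f := Continuous.div (by fun_prop) (by fun_prop) hden
  have hgc : Continuous g := Continuous.div (by fun_prop) (by fun_prop) hden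
  have hf0 : f 0 = 0 := by simp [hf_def]
  have hg0 : g 0 = 0 := by simp [hg_def]
  set j : B := cfcₙ f a with hj_def
  have hjsa : IsSelfAdjoint j := cfcₙ_predicate f a
  refine ⟨j, ?_, ?_⟩
  · have hj2 : j = a * cfcₙ g a := by
      have hfg : f = fun t => t * g t := by funext t; simp only [hf_def, hg_def]; ring
      rw [hj_def, hfg, cfcₙ_mul (fun t : ℝ => t) g a (by fun_prop) (by simp) hgc.continuousOn hg0,
        cfcₙ_id' ℝ a]
    rw [hj2]
    exact J.mul_mem_right _ _ haJ
  · have key : ⟪y - y <• j, y - y <• j⟫_B = cfcₙ (fun t => t * (1 - f t) ^ 2) a := by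
      have h1 : ⟪y - y <• j, y - y <• j⟫_B = a - j * a - (a - j * a) * j := by
        simp [RightCStarModule.inner_sub_right, hjsa.star_eq, mul_assoc, ← ha_def]
      have hfun : (fun t : ℝ => t * (1 - f t) ^ 2)
          = fun t => (t - f t * t) - (t - f t * t) * f t := by
        funext t; ring
      rw [h1, hfun,
        cfcₙ_sub (fun t => t - f t * t) (fun t => (t - f t * t) * f t) a
          (by fun_prop) (by simp [hf0]) (by fun_prop) (by simp [hf0]),
        cfcₙ_mul (fun t => t - f t * t) f a (by fun_prop) (by simp [hf0])
          hfc.continuousOn hf0,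
        cfcₙ_sub (fun t : ℝ => t) (fun t => f t * t) a (by fun_prop) (by simp)
          (by fun_prop) (by simp [hf0]),
        cfcₙ_mul f (fun t : ℝ => t) a hfc.continuousOn hf0 (by fun_prop) (by simp),
        cfcₙ_id' ℝ a]
    have hnorm : ‖⟪y - y <• j, y - y <• j⟫_B‖ ≤ s / 2 := by
      rw [key]
      refine norm_cfcₙ_le fun t htmem => ?_
      have ht : 0 ≤ t := quasispectrum_nonneg_of_nonneg a ha0 t htmem
      have h2 : 1 - f t = δ / (δ + t ^ 2) := by
        rw [hf_def]
        field_simp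
        ring
      rw [h2]
      have h3 : 0 ≤ t * (δ / (δ + t ^ 2)) ^ 2 := by positivity
      rw [Real.norm_of_nonneg h3, hδ_def]
      exact real_key hs ht
    have hsq : ‖y - y <• j‖ ^ 2 ≤ s / 2 := by rw [RightCStarModule.norm_sq_eq (A := B)]; exact hnorm
    nlinarith [norm_nonneg (y - y <• j), hε]

end helpers

theorem boundedModuleMaps_eq_of_ideal_contains_inner
    {B Y Z : Type*}
    [NonUnitalCStarAlgebra B] [PartialOrder B] [StarOrderedRing B]
    [NormedAddCommGroup Y] [NormedSpace ℂ Y] [SMul Bᵐᵒᵖ Y] [RightCStarModule B Y]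
    [CompleteSpace Y]
    [NormedAddCommGroup Z] [NormedSpace ℂ Z] [SMul Bᵐᵒᵖ Z] [RightCStarModule B Z]
    [CompleteSpace Z]
    (J : TwoSidedIdeal B) (hJclosed : IsClosed (J : Set B))
    (hJinner : ∀ y y' : Y, ⟪y, y'⟫_B ∈ J) :
    (∀ u : Y →ₗ[ℂ] Z, (∃ M : ℝ, ∀ y : Y, ‖u y‖ ≤ M * ‖y‖) →
        (∀ (y : Y) (j : B), j ∈ J → u (y <• j) = u y <• j) →
        ∀ (y : Y) (b : B), u (y <• b) = u y <• b) ∧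
      {u : Y →ₗ[ℂ] Z | (∃ M : ℝ, ∀ y : Y, ‖u y‖ ≤ M * ‖y‖) ∧
          ∀ (y : Y) (b : B), u (y <• b) = u y <• b} =
        {u : Y →ₗ[ℂ] Z | (∃ M : ℝ, ∀ y : Y, ‖u y‖ ≤ M * ‖y‖) ∧
          ∀ (y : Y) (j : B), j ∈ J → u (y <• j) = u y <• j} := by
  have main : ∀ u : Y →ₗ[ℂ] Z, (∃ M : ℝ, ∀ y : Y, ‖u y‖ ≤ M * ‖y‖) →
      (∀ (y : Y) (j : B), j ∈ J → u (y <• j) = u y <• j) →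
      ∀ (y : Y) (b : B), u (y <• b) = u y <• b := by
    rintro u ⟨M, hM⟩ hJmod y b
    set M' : ℝ := max M 0 with hM'_def
    have hM'0 : 0 ≤ M' := le_max_right _ _
    have hM' : ∀ y : Y, ‖u y‖ ≤ M' * ‖y‖ :=
      fun y => (hM y).trans (mul_le_mul_of_nonneg_right (le_max_left _ _) (norm_nonneg y))
    rw [← sub_eq_zero]
    by_contra hne
    have hpos : 0 < ‖u (y <• b) - u y <• b‖ := norm_pos_iff.mpr hne
    set ε : ℝ := ‖u (y <• b) - u y <• b‖ with hε_def
    obtain ⟨j, hjJ, hj⟩ := hcm_approx J hJinner y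
      (ε := ε / (2 * (M' + 1) * (‖b‖ + 1))) (by positivity)
    set d : Y := y - y <• j with hd_def
    have e1 : u (y <• b) - u y <• b = u (d <• b) - (u d) <• b := by
      have h2 : u ((y <• j) <• b) = (u (y <• j)) <• b := by
        rw [hcm_smul_mul, hJmod y (j * b) (J.mul_mem_right _ _ hjJ), hJmod y j hjJ,
          hcm_smul_mul]
      rw [hd_def, hcm_sub_smul, map_sub, h2, map_sub, hcm_sub_smul, hJmod y j hjJ]
      abel
    have hub : ε ≤ M' * (‖d‖ * ‖b‖) + (M' * ‖d‖) * ‖b‖ := by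
      rw [hε_def, e1]
      calc ‖u (d <• b) - (u d) <• b‖ ≤ ‖u (d <• b)‖ + ‖(u d) <• b‖ := norm_sub_le _ _
        _ ≤ M' * ‖d <• b‖ + ‖u d‖ * ‖b‖ := add_le_add (hM' _) (hcm_norm_smul_le _ _)
        _ ≤ M' * (‖d‖ * ‖b‖) + (M' * ‖d‖) * ‖b‖ := by
            gcongr
            · exact hcm_norm_smul_le _ _
            · exact hM' _
    have hj' : ‖d‖ * (2 * (M' + 1) * (‖b‖ + 1)) < ε :=
      (lt_div_iff₀ (by positivity)).mp hj
    nlinarith [norm_nonneg d, norm_nonneg b, mul_nonneg (norm_nonneg d) (norm_nonneg b), hpos]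
  refine ⟨main, ?_⟩
  ext u
  simp only [Set.mem_setOf_eq]
  exact ⟨fun ⟨hbd, h⟩ => ⟨hbd, fun y j _ => h y j⟩, fun ⟨hbd, h⟩ => ⟨hbd, main u hbd h⟩⟩
end

section
/- Let B be a C*-algebra, let W and Z be Hilbert C*-modules over B, let X ⊆ W and Y ⊆ Z be closed ℂ-linear subspaces such that the closed linear span of {x·b : x ∈ X, b ∈ B} equals W and the closed linear span of {y·b : y ∈ Y, b ∈ B} equals Z, and let T : X → Y, S : Y → X be ℂ-linear maps satisfying ⟨T(x) | y⟩ = ⟨x | S(y)⟩ for all x ∈ X, y ∈ Y. Then there exist bounded B-module maps R : W → Z and R' : Z → W such that R restricted to X equals T, R' restricted to Y equals S, ⟨R(w) | z⟩ = ⟨w | R'(z)⟩ for all w ∈ W and z ∈ Z (so R is adjointable with adjoint R'), and ‖R‖ = ‖T‖ and ‖R'‖ = ‖S‖ (operator norms). -/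
/-!
Part of the proof of Theorem 4.1 ((ii) ⇒ (i)) of the paper: let `W`, `Z` be Hilbert
C*-modules over a C*-algebra `B`, let `X ⊆ W` and `Y ⊆ Z` be closed ℂ-linear subspaces whose
`B`-orbits have dense linear span in `W` and `Z` respectively, and let `T : X → Y`,
`S : Y → X` be ℂ-linear maps with `⟨T x | y⟩ = ⟨x | S y⟩`.  Then `T` and `S` extend to
bounded `B`-module maps `R : W → Z` and `R' : Z → W` which are adjoint to one another and
satisfy `‖R‖ = ‖T‖` and `‖R'‖ = ‖S‖` (operator norms, expressed as suprema of the norms of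
the images of the closed unit balls).
-/

open scoped InnerProductSpace RightActions

/-- The Hilbert C⋆-module class as it stood in Mathlib (Dec 2024): a right `A`-module
(`SMul Aᵐᵒᵖ E`) with an `A`-valued inner product, right `A`-linear in the second variable.
Mathlib's current `CStarModule` is a left-module notion, so the old one is restated here. -/
class CStarModuleRight (A E : Type*) [NonUnitalSemiring A] [StarRing A]
    [Module ℂ A] [AddCommGroup E] [Module ℂ E] [PartialOrder A] [SMul Aᵐᵒᵖ E] [Norm A] [Norm E]
    extends Inner A E where
  inner_add_right {x} {y} {z} : inner x (y + z) = inner x y + inner x z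
  inner_self_nonneg {x} : 0 ≤ inner x x
  inner_self {x} : inner x x = 0 ↔ x = 0
  inner_op_smul_right {a : A} {x y : E} : inner x (y <• a) = inner x y * a
  inner_smul_right_complex {z : ℂ} {x} {y} : inner x (z • y) = z • inner x y
  star_inner x y : star (inner x y) = inner y x
  norm_eq_sqrt_norm_inner_self x : ‖x‖ = √‖inner x x‖

/-- The operator norm of a map between two spaces with norms: the supremum of the norms of
the images of the points of the closed unit ball. -/
noncomputable def supNormOnBall {E F : Type*} [Norm E] [Norm F] (f : E → F) : ℝ :=
  sSup {r : ℝ | ∃ x : E, ‖x‖ ≤ 1 ∧ r = ‖f x‖}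

set_option linter.unusedSectionVars false
set_option maxHeartbeats 2000000

namespace CStarModuleRight

section general

variable {A E : Type*} [NonUnitalRing A] [StarRing A] [AddCommGroup E] [Module ℂ A]
  [Module ℂ E] [PartialOrder A] [SMul Aᵐᵒᵖ E] [Norm A] [Norm E] [CStarModuleRight A E]
  [StarModule ℂ A]

lemma inner_add_left {x y z : E} : ⟪x + y, z⟫_A = ⟪x, z⟫_A + ⟪y, z⟫_A := by
  rw [← star_inner z (x + y), inner_add_right, star_add, star_inner, star_inner]

lemma inner_op_smul_left {a : A} {x y : E} : ⟪x <• a, y⟫_A = star a * ⟪x, y⟫_A := by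
  rw [← star_inner y (x <• a), inner_op_smul_right, star_mul, star_inner]

lemma inner_smul_left_complex {z : ℂ} {x y : E} : ⟪z • x, y⟫_A = star z • ⟪x, y⟫_A := by
  rw [← star_inner y (z • x), inner_smul_right_complex, star_smul, star_inner]

lemma inner_smul_left_real {z : ℝ} {x y : E} : ⟪z • x, y⟫_A = z • ⟪x, y⟫_A := by
  have h₁ : z • x = (z : ℂ) • x := by simp
  rw [h₁, inner_smul_left_complex]
  simp

lemma inner_smul_right_real {z : ℝ} {x y : E} : ⟪x, z • y⟫_A = z • ⟪x, y⟫_A := by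
  have h₁ : z • y = (z : ℂ) • y := by simp
  rw [h₁, inner_smul_right_complex]
  simp

/-- The inner product as a sesquilinear map. -/
def innerₛₗ : E →ₗ⋆[ℂ] E →ₗ[ℂ] A where
  toFun x := { toFun := fun y => ⟪x, y⟫_A
               map_add' := fun z y => inner_add_right
               map_smul' := fun z y => inner_smul_right_complex }
  map_add' z y := by ext; simp [inner_add_left]
  map_smul' z y := by ext; simp [inner_smul_left_complex]

lemma innerₛₗ_apply {x y : E} : innerₛₗ x y = ⟪x, y⟫_A := rfl

lemma inner_zero_right {x : E} : ⟪x, 0⟫_A = 0 := map_zero (innerₛₗ x)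

lemma inner_zero_left {x : E} : ⟪0, x⟫_A = 0 := map_zero (innerₛₗ.flip x)

lemma inner_sub_right {x y z : E} : ⟪x, y - z⟫_A = ⟪x, y⟫_A - ⟪x, z⟫_A :=
  map_sub (innerₛₗ x) y z

lemma inner_sub_left {x y z : E} : ⟪x - y, z⟫_A = ⟪x, z⟫_A - ⟪y, z⟫_A :=
  map_sub (innerₛₗ.flip z) x y

lemma inner_sum_right {ι : Type*} {s : Finset ι} {x : E} {y : ι → E} :
    ⟪x, ∑ i ∈ s, y i⟫_A = ∑ i ∈ s, ⟪x, y i⟫_A :=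
  map_sum (innerₛₗ x) ..

lemma inner_sum_left {ι : Type*} {s : Finset ι} {x : ι → E} {y : E} :
    ⟪∑ i ∈ s, x i, y⟫_A = ∑ i ∈ s, ⟪x i, y⟫_A :=
  map_sum (innerₛₗ.flip y) ..

end general

section norm

variable {A E : Type*} [NonUnitalCStarAlgebra A] [PartialOrder A] [StarOrderedRing A]
  [NormedAddCommGroup E] [NormedSpace ℂ E] [SMul Aᵐᵒᵖ E] [CStarModuleRight A E]

lemma norm_sq_eq {x : E} : ‖x‖ ^ 2 = ‖⟪x, x⟫_A‖ := by
  rw [norm_eq_sqrt_norm_inner_self (A := A) x, Real.sq_sqrt (norm_nonneg _)]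

lemma inner_mul_inner_swap_le {x y : E} : ⟪y, x⟫_A * ⟪x, y⟫_A ≤ ‖x‖ ^ 2 • ⟪y, y⟫_A := by
  rcases eq_or_ne x 0 with h | h
  · simp [h, inner_zero_left, inner_zero_right]
  · have h₁ : ∀ (a : A),
        (0 : A) ≤ ‖x‖ ^ 2 • (a * star a) - ‖x‖ ^ 2 • (a * ⟪x, y⟫_A)
                  - ‖x‖ ^ 2 • (⟪y, x⟫_A * star a) + ‖x‖ ^ 2 • (‖x‖ ^ 2 • ⟪y, y⟫_A) := fun a => by
      calc (0 : A) ≤ ⟪x <• star a - ‖x‖ ^ 2 • y, x <• star a - ‖x‖ ^ 2 • y⟫_A := by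
                      exact inner_self_nonneg
            _ = a * ⟪x, x⟫_A * star a - ‖x‖ ^ 2 • (a * ⟪x, y⟫_A)
                  - ‖x‖ ^ 2 • (⟪y, x⟫_A * star a) + ‖x‖ ^ 2 • (‖x‖ ^ 2 • ⟪y, y⟫_A) := by
                      simp only [inner_sub_right, inner_op_smul_right, inner_sub_left,
                        inner_op_smul_left, star_star, inner_smul_left_real, mul_sub,
                        mul_smul_comm, smul_mul_assoc, inner_smul_right_real, smul_sub,
                        sub_mul, mul_assoc]
                      abel
            _ ≤ ‖x‖ ^ 2 • (a * star a) - ‖x‖ ^ 2 • (a * ⟪x, y⟫_A)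
                  - ‖x‖ ^ 2 • (⟪y, x⟫_A * star a) + ‖x‖ ^ 2 • (‖x‖ ^ 2 • ⟪y, y⟫_A) := by
                      gcongr
                      calc _ ≤ ‖⟪x, x⟫_A‖ • (a * star a) :=
                          CStarAlgebra.star_right_conjugate_le_norm_smul (star_inner x x)
                        _ = ‖x‖ ^ 2 • (a * star a) := by rw [norm_sq_eq (A := A)]
    specialize h₁ ⟪y, x⟫_A
    simp only [star_inner, sub_self, zero_sub, le_neg_add_iff_add_le, add_zero] at h₁
    rwa [smul_le_smul_iff_of_pos_left (pow_pos (norm_pos_iff.mpr h) _)] at h₁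

variable (E) in
lemma norm_inner_le {x y : E} : ‖⟪x, y⟫_A‖ ≤ ‖x‖ * ‖y‖ := by
  have := calc ‖⟪x, y⟫_A‖ ^ 2 = ‖⟪y, x⟫_A * ⟪x, y⟫_A‖ := by
                rw [← star_inner x y, CStarRing.norm_star_mul_self, pow_two]
    _ ≤ ‖‖x‖ ^ 2 • ⟪y, y⟫_A‖ := by
                refine CStarAlgebra.norm_le_norm_of_nonneg_of_le ?_ inner_mul_inner_swap_le
                rw [← star_inner x y]
                exact star_mul_self_nonneg ⟪x, y⟫_A
    _ = ‖x‖ ^ 2 * ‖⟪y, y⟫_A‖ := by simp [norm_smul]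
    _ = (‖x‖ * ‖y‖) ^ 2 := by rw [← norm_sq_eq (A := A) (x := y), mul_pow]
  exact (pow_le_pow_iff_left₀ (norm_nonneg _) (by positivity) (by simp)).mp this

/-- The inner product as a continuous sesquilinear map. -/
noncomputable def innerSL : E →L⋆[ℂ] E →L[ℂ] A :=
  LinearMap.mkContinuous₂ (innerₛₗ : E →ₗ⋆[ℂ] E →ₗ[ℂ] A) 1 <| fun x y => by
    simp [innerₛₗ_apply, norm_inner_le E]

lemma innerSL_apply {x y : E} : innerSL x y = ⟪x, y⟫_A := rfl

lemma continuous_inner : Continuous (fun x : E × E => ⟪x.1, x.2⟫_A) := by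
  simp_rw [← innerSL_apply]
  fun_prop

end norm

end CStarModuleRight


private lemma supNormOnBall_clm {E F : Type*} [NormedAddCommGroup E] [NormedAddCommGroup F]
    [NormedSpace ℂ E] [NormedSpace ℂ F] (f : E →L[ℂ] F) : supNormOnBall ⇑f = ‖f‖ := by
  rw [← f.sSup_unitClosedBall_eq_norm]
  unfold supNormOnBall
  congr 1
  ext r
  simp only [Set.mem_setOf_eq, Set.mem_image, Metric.mem_closedBall, dist_zero_right]
  exact ⟨fun ⟨x, h1, h2⟩ => ⟨x, h1, h2.symm⟩, fun ⟨x, h1, h2⟩ => ⟨x, h1, h2.symm⟩⟩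

section Helpers

variable {B W Z : Type*}
    [NonUnitalCStarAlgebra B] [PartialOrder B] [StarOrderedRing B]
    [NormedAddCommGroup W] [NormedSpace ℂ W] [SMul Bᵐᵒᵖ W] [CStarModuleRight B W]
    [CompleteSpace W]
    [NormedAddCommGroup Z] [NormedSpace ℂ Z] [SMul Bᵐᵒᵖ Z] [CStarModuleRight B Z]
    [CompleteSpace Z]

private lemma norm_op_smul_le (x : W) (b : B) : ‖x <• b‖ ≤ ‖x‖ * ‖b‖ := by
  have h1 : ‖x <• b‖ ^ 2 = ‖⟪x <• b, x <• b⟫_B‖ := CStarModuleRight.norm_sq_eq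
  have h2 : ⟪x <• b, x <• b⟫_B = ⟪x <• b, x⟫_B * b := CStarModuleRight.inner_op_smul_right
  have h3 : ‖⟪x <• b, x⟫_B‖ ≤ ‖x <• b‖ * ‖x‖ := CStarModuleRight.norm_inner_le W
  have h4 : ‖x <• b‖ ^ 2 ≤ ‖x <• b‖ * (‖x‖ * ‖b‖) := by
    rw [h1, h2]
    calc ‖⟪x <• b, x⟫_B * b‖ ≤ ‖⟪x <• b, x⟫_B‖ * ‖b‖ := norm_mul_le _ _
      _ ≤ ‖x <• b‖ * (‖x‖ * ‖b‖) := by nlinarith [norm_nonneg b]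
  rcases eq_or_lt_of_le (norm_nonneg (x <• b)) with hz | hz
  · rw [← hz]; positivity
  · nlinarith

private lemma orth (Y : Submodule ℂ Z)
    (hYgen : closure (Submodule.span ℂ
      {z : Z | ∃ y ∈ Y, ∃ b : B, z = y <• b} : Set Z) = Set.univ)
    (z : Z) (hz : ∀ y : Y, ⟪z, (y : Z)⟫_B = 0) : z = 0 := by
  set K : Submodule ℂ Z := LinearMap.ker (CStarModuleRight.innerSL (A := B) z : Z →ₗ[ℂ] B) with hKdef
  have hK : IsClosed (K : Set Z) := ContinuousLinearMap.isClosed_ker _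
  have hspan : Submodule.span ℂ {z' : Z | ∃ y ∈ Y, ∃ b : B, z' = y <• b} ≤ K := by
    rw [Submodule.span_le]
    rintro z' ⟨y, hy, b, rfl⟩
    have : ⟪z, y <• b⟫_B = ⟪z, y⟫_B * b := CStarModuleRight.inner_op_smul_right
    have h0 : ⟪z, y⟫_B = 0 := hz ⟨y, hy⟩
    simp only [LinearMap.mem_ker, K]
    show ⟪z, y <• b⟫_B = 0
    rw [this, h0, zero_mul]
  have hsub : (Set.univ : Set Z) ⊆ (K : Set Z) := by
    rw [← hYgen]; exact closure_minimal hspan hK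
  exact CStarModuleRight.inner_self.mp (hsub (Set.mem_univ z))

private lemma continuous_of_formal_adjoint
    (X : Submodule ℂ W) (hX : IsClosed (X : Set W))
    (Y : Submodule ℂ Z) (hY : IsClosed (Y : Set Z))
    (hYgen : closure (Submodule.span ℂ
      {z : Z | ∃ y ∈ Y, ∃ b : B, z = y <• b} : Set Z) = Set.univ)
    (T : X →ₗ[ℂ] Y) (S : Y →ₗ[ℂ] X)
    (h : ∀ (x : X) (y : Y), ⟪(T x : Z), (y : Z)⟫_B = ⟪(x : W), (S y : W)⟫_B) :
    Continuous T := by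
  haveI : CompleteSpace X := hX.completeSpace_coe
  haveI : CompleteSpace Y := hY.completeSpace_coe
  apply T.continuous_of_seq_closed_graph
  intro u x y hu hTu
  have key : ∀ y' : Y, ⟪(y : Z) - (T x : Z), (y' : Z)⟫_B = 0 := by
    intro y'
    have hcl : Continuous fun w : Z => ⟪w, (y' : Z)⟫_B :=
      CStarModuleRight.continuous_inner.comp (continuous_id.prodMk continuous_const)
    have hcr : Continuous fun w : W => ⟪w, ((S y' : X) : W)⟫_B :=
      CStarModuleRight.continuous_inner.comp (continuous_id.prodMk continuous_const)
    have h1 : Filter.Tendsto (fun n => ⟪(T (u n) : Z), (y' : Z)⟫_B)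
        Filter.atTop (nhds ⟪(y : Z), (y' : Z)⟫_B) :=
      (hcl.tendsto _).comp ((continuous_subtype_val.tendsto _).comp hTu)
    have h2 : Filter.Tendsto (fun n => ⟪((u n : W)), ((S y' : X) : W)⟫_B)
        Filter.atTop (nhds ⟪(x : W), ((S y' : X) : W)⟫_B) :=
      (hcr.tendsto _).comp ((continuous_subtype_val.tendsto _).comp hu)
    have h3 : (fun n => ⟪(T (u n) : Z), (y' : Z)⟫_B)
        = fun n => ⟪((u n : W)), ((S y' : X) : W)⟫_B := funext fun n => h (u n) y'
    have h4 : ⟪(y : Z), (y' : Z)⟫_B = ⟪(x : W), ((S y' : X) : W)⟫_B :=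
      tendsto_nhds_unique (h3 ▸ h1) h2
    rw [CStarModuleRight.inner_sub_left, h4, ← h x y', sub_self]
  have h0 := orth Y hYgen _ key
  exact Subtype.ext (sub_eq_zero.mp h0)

variable {E F : Type*}
    [NormedAddCommGroup E] [NormedSpace ℂ E] [SMul Bᵐᵒᵖ E] [CStarModuleRight B E]
    [NormedAddCommGroup F] [NormedSpace ℂ F] [SMul Bᵐᵒᵖ F] [CStarModuleRight B F]

private lemma inner_linearCombination_congr {ι : Type*} (u v : ι → E) (u' v' : ι → F)
    (huv : ∀ p q, ⟪u p, v q⟫_B = ⟪u' p, v' q⟫_B) (f f' : ι →₀ ℂ) :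
    ⟪Finsupp.linearCombination ℂ u f, Finsupp.linearCombination ℂ v f'⟫_B
      = ⟪Finsupp.linearCombination ℂ u' f, Finsupp.linearCombination ℂ v' f'⟫_B := by
  classical
  simp only [Finsupp.linearCombination_apply, Finsupp.sum, CStarModuleRight.inner_sum_left,
    CStarModuleRight.inner_sum_right, CStarModuleRight.inner_smul_left_complex,
    CStarModuleRight.inner_smul_right_complex, huv]

private lemma norm_linearCombination_le {ι : Type*} (u : ι → E) (f : ι →₀ ℂ) (c : ι → ℝ)
    (hc : ∀ p, ‖u p‖ ≤ c p) :
    ‖Finsupp.linearCombination ℂ u f‖ ≤ ∑ p ∈ f.support, ‖f p‖ * c p := by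
  rw [Finsupp.linearCombination_apply, Finsupp.sum]
  calc ‖∑ p ∈ f.support, f p • u p‖ ≤ ∑ p ∈ f.support, ‖f p • u p‖ := norm_sum_le _ _
    _ ≤ ∑ p ∈ f.support, ‖f p‖ * c p := Finset.sum_le_sum fun p _ => by
        rw [norm_smul]; exact mul_le_mul_of_nonneg_left (hc p) (norm_nonneg _)


private lemma exists_extension
    (X : Submodule ℂ W) (Y : Submodule ℂ Z)
    (hXgen : closure (Submodule.span ℂ
      {w : W | ∃ x ∈ X, ∃ b : B, w = x <• b} : Set W) = Set.univ)
    (T : X →ₗ[ℂ] Y) (S : Y →ₗ[ℂ] X)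
    (h : ∀ (x : X) (y : Y), ⟪(T x : Z), (y : Z)⟫_B = ⟪(x : W), (S y : W)⟫_B)
    (nT nS : ℝ) (hnT : 0 ≤ nT) (hnS : 0 ≤ nS)
    (hT : ∀ x : X, ‖T x‖ ≤ nT * ‖x‖) (hS : ∀ y : Y, ‖S y‖ ≤ nS * ‖y‖) :
    ∃ R : W →L[ℂ] Z, (∀ (w : W) (y : Y), ⟪R w, (y : Z)⟫_B = ⟪w, ((S y : X) : W)⟫_B) ∧
      ‖R‖ ≤ Real.sqrt (nT * nS) := by
  classical
  obtain ⟨K, hKdef⟩ : ∃ K : ℝ, K = nT * nS := ⟨_, rfl⟩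
  have hK : 0 ≤ K := hKdef ▸ mul_nonneg hnT hnS
  set A : Module.End ℂ X := (S ∘ₗ T : X →ₗ[ℂ] X) with hAdef
  -- adjointness of A
  have hA : ∀ x x' : X, ⟪(A x : W), (x' : W)⟫_B = ⟪(x : W), (A x' : W)⟫_B := by
    intro x x'
    calc ⟪((S (T x) : X) : W), (x' : W)⟫_B
        = star ⟪(x' : W), ((S (T x) : X) : W)⟫_B := (CStarModuleRight.star_inner _ _).symm
      _ = star ⟪(T x' : Z), (T x : Z)⟫_B := by rw [h x' (T x)]
      _ = ⟪(T x : Z), (T x' : Z)⟫_B := CStarModuleRight.star_inner _ _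
      _ = ⟪(x : W), ((S (T x') : X) : W)⟫_B := h x (T x')
  have hApow : ∀ (m : ℕ) (x x' : X),
      ⟪((A ^ m) x : W), (x' : W)⟫_B = ⟪(x : W), ((A ^ m) x' : W)⟫_B := by
    intro m
    induction m with
    | zero => intro x x'; simp
    | succ n ih =>
      intro x x'
      have e1 : (A ^ (n + 1)) x = (A ^ n) (A x) := by
        rw [pow_succ, Module.End.mul_apply]
      have e2 : (A ^ (n + 1)) x' = A ((A ^ n) x') := by
        rw [pow_succ', Module.End.mul_apply]
      rw [e1, e2, ih (A x) x', hA x ((A ^ n) x')]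
  have hAnorm : ∀ (m : ℕ) (x : X), ‖(A ^ m) x‖ ≤ K ^ m * ‖x‖ := by
    intro m
    induction m with
    | zero => intro x; simp
    | succ n ih =>
      intro x
      have e1 : (A ^ (n + 1)) x = A ((A ^ n) x) := by rw [pow_succ', Module.End.mul_apply]
      have : ‖A ((A ^ n) x)‖ ≤ K * ‖(A ^ n) x‖ := by
        show ‖S (T ((A ^ n) x))‖ ≤ K * ‖(A ^ n) x‖
        calc ‖S (T ((A ^ n) x))‖ ≤ nS * ‖T ((A ^ n) x)‖ := hS _
          _ ≤ nS * (nT * ‖(A ^ n) x‖) :=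
              mul_le_mul_of_nonneg_left (hT _) hnS
          _ = K * ‖(A ^ n) x‖ := by rw [hKdef]; ring
      rw [e1, pow_succ]
      calc ‖A ((A ^ n) x)‖ ≤ K * ‖(A ^ n) x‖ := this
        _ ≤ K * (K ^ n * ‖x‖) := mul_le_mul_of_nonneg_left (ih x) hK
        _ = K ^ n * K * ‖x‖ := by ring
  -- the span maps
  set α : (X × B →₀ ℂ) →ₗ[ℂ] W :=
    Finsupp.linearCombination ℂ (fun p : X × B => (p.1 : W) <• p.2) with hαdef
  set β : (X × B →₀ ℂ) →ₗ[ℂ] Z :=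
    Finsupp.linearCombination ℂ (fun p : X × B => (T p.1 : Z) <• p.2) with hβdef
  set γ : ℕ → ((X × B →₀ ℂ) →ₗ[ℂ] W) :=
    fun m => Finsupp.linearCombination ℂ (fun p : X × B => ((A ^ m) p.1 : W) <• p.2) with hγdef
  have hγbound : ∀ (m : ℕ) (f : X × B →₀ ℂ),
      ‖γ m f‖ ≤ K ^ m * ∑ p ∈ f.support, ‖f p‖ * (‖(p.1 : W)‖ * ‖p.2‖) := by
    intro m f
    have := norm_linearCombination_le (fun p : X × B => ((A ^ m) p.1 : W) <• p.2) f
      (fun p => K ^ m * (‖(p.1 : W)‖ * ‖p.2‖)) (fun p => by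
        calc ‖((A ^ m) p.1 : W) <• p.2‖ ≤ ‖((A ^ m) p.1 : W)‖ * ‖p.2‖ :=
            norm_op_smul_le _ _
          _ ≤ (K ^ m * ‖(p.1 : W)‖) * ‖p.2‖ :=
              mul_le_mul_of_nonneg_right (hAnorm m p.1) (norm_nonneg _)
          _ = K ^ m * (‖(p.1 : W)‖ * ‖p.2‖) := by ring)
    refine this.trans (le_of_eq ?_)
    rw [Finset.mul_sum]
    exact Finset.sum_congr rfl fun p _ => by ring
  -- Cauchy-Schwarz step
  have hCS : ∀ (m : ℕ) (f : X × B →₀ ℂ), ‖γ m f‖ ^ 2 ≤ ‖α f‖ * ‖γ (2 * m) f‖ := by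
    intro m f
    have e1 : ⟪γ m f, γ m f⟫_B = ⟪α f, γ (2 * m) f⟫_B := by
      apply inner_linearCombination_congr
      intro p q
      have e0 : (A ^ m) ((A ^ m) q.1) = (A ^ (2 * m)) q.1 := by
        rw [two_mul, pow_add, Module.End.mul_apply]
      have hpq : ⟪((A ^ m) p.1 : W), ((A ^ m) q.1 : W)⟫_B
          = ⟪(p.1 : W), ((A ^ (2 * m)) q.1 : W)⟫_B := by
        rw [hApow m p.1 ((A ^ m) q.1), e0]
      simp only [CStarModuleRight.inner_op_smul_left, CStarModuleRight.inner_op_smul_right, hpq]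
    rw [CStarModuleRight.norm_sq_eq (A := B), e1]
    exact CStarModuleRight.norm_inner_le W
  have hβsq : ∀ f : X × B →₀ ℂ, ‖β f‖ ^ 2 ≤ ‖α f‖ * ‖γ 1 f‖ := by
    intro f
    have e1 : ⟪β f, β f⟫_B = ⟪α f, γ 1 f⟫_B := by
      apply inner_linearCombination_congr
      intro p q
      have hpq : ⟪(T p.1 : Z), (T q.1 : Z)⟫_B = ⟪(p.1 : W), ((A ^ 1) q.1 : W)⟫_B := by
        rw [pow_one]; exact h p.1 (T q.1)
      simp only [CStarModuleRight.inner_op_smul_left, CStarModuleRight.inner_op_smul_right, hpq]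
    rw [CStarModuleRight.norm_sq_eq (A := B), e1]
    exact CStarModuleRight.norm_inner_le W
  -- iteration
  have hiter : ∀ (f : X × B →₀ ℂ) (n : ℕ),
      ‖γ 1 f‖ ^ (2 ^ n) ≤ ‖α f‖ ^ (2 ^ n - 1) * ‖γ (2 ^ n) f‖ := by
    intro f n
    induction n with
    | zero => simp
    | succ n ih =>
      have h1 : (1 : ℕ) ≤ 2 ^ n := Nat.one_le_two_pow
      have e1 : ‖γ 1 f‖ ^ (2 ^ (n + 1)) = (‖γ 1 f‖ ^ (2 ^ n)) ^ 2 := by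
        rw [← pow_mul, pow_succ]
      have e2 : (‖α f‖ ^ (2 ^ n - 1) * ‖γ (2 ^ n) f‖) ^ 2
          = ‖α f‖ ^ (2 * (2 ^ n - 1)) * ‖γ (2 ^ n) f‖ ^ 2 := by
        rw [mul_pow, ← pow_mul]; ring_nf
      calc ‖γ 1 f‖ ^ (2 ^ (n + 1)) = (‖γ 1 f‖ ^ (2 ^ n)) ^ 2 := e1
        _ ≤ (‖α f‖ ^ (2 ^ n - 1) * ‖γ (2 ^ n) f‖) ^ 2 := by
            apply pow_le_pow_left₀ (by positivity) ih
        _ = ‖α f‖ ^ (2 * (2 ^ n - 1)) * ‖γ (2 ^ n) f‖ ^ 2 := e2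
        _ ≤ ‖α f‖ ^ (2 * (2 ^ n - 1)) * (‖α f‖ * ‖γ (2 * 2 ^ n) f‖) := by
            exact mul_le_mul_of_nonneg_left (hCS (2 ^ n) f) (by positivity)
        _ = ‖α f‖ ^ (2 * (2 ^ n - 1) + 1) * ‖γ (2 * 2 ^ n) f‖ := by
            rw [pow_succ]; ring
        _ = ‖α f‖ ^ (2 ^ (n + 1) - 1) * ‖γ (2 ^ (n + 1)) f‖ := by
            have e4 : 2 * 2 ^ n = 2 ^ (n + 1) := by rw [pow_succ]; ring
            have e3 : 2 * (2 ^ n - 1) + 1 = 2 ^ (n + 1) - 1 := by omega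
            rw [e3, e4]
  -- key norm bound
  have hβbound : ∀ f : X × B →₀ ℂ, ‖β f‖ ≤ Real.sqrt K * ‖α f‖ := by
    intro f
    set Cf : ℝ := ∑ p ∈ f.support, ‖f p‖ * (‖(p.1 : W)‖ * ‖p.2‖) with hCfdef
    have hCf : 0 ≤ Cf := Finset.sum_nonneg fun p _ => by positivity
    set c : ℝ := ‖α f‖ with hcdef
    have hc : 0 ≤ c := norm_nonneg _
    have hbound : ∀ n : ℕ, ‖γ 1 f‖ ^ (2 ^ n) ≤ c ^ (2 ^ n - 1) * (K ^ (2 ^ n) * Cf) :=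
      fun n => (hiter f n).trans
        (mul_le_mul_of_nonneg_left (hγbound (2 ^ n) f) (by positivity))
    have hmain : ‖γ 1 f‖ ≤ c * K := by
      by_contra hcon
      push_neg at hcon
      have hx1 : 0 < ‖γ 1 f‖ := lt_of_le_of_lt (by positivity) hcon
      rcases eq_or_lt_of_le hc with hc0 | hc0
      · have h2 := hbound 1
        rw [← hc0] at h2
        norm_num at h2
        rw [h2, norm_zero] at hx1
        exact lt_irrefl _ hx1
      rcases eq_or_lt_of_le hK with hK0 | hK0
      · have h2 := hbound 1
        rw [← hK0] at h2
        norm_num at h2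
        rw [h2, norm_zero] at hx1
        exact lt_irrefl _ hx1
      have hr1 : 1 < ‖γ 1 f‖ / (c * K) := (one_lt_div (by positivity)).mpr hcon
      obtain ⟨n, hn⟩ := pow_unbounded_of_one_lt (Cf / c) hr1
      have h2 : (‖γ 1 f‖ / (c * K)) ^ n ≤ (‖γ 1 f‖ / (c * K)) ^ (2 ^ n) :=
        pow_le_pow_right₀ hr1.le (Nat.lt_two_pow_self).le
      have h3 : (‖γ 1 f‖ / (c * K)) ^ (2 ^ n) ≤ Cf / c := by
        rw [div_pow, div_le_div_iff₀ (by positivity) hc0]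
        have hcc : c ^ (2 ^ n - 1) * c = c ^ (2 ^ n) := by
          rw [← pow_succ]
          congr 1
          have : (1 : ℕ) ≤ 2 ^ n := Nat.one_le_two_pow
          omega
        calc ‖γ 1 f‖ ^ 2 ^ n * c ≤ (c ^ (2 ^ n - 1) * (K ^ (2 ^ n) * Cf)) * c :=
              mul_le_mul_of_nonneg_right (hbound n) hc
          _ = Cf * ((c ^ (2 ^ n - 1) * c) * K ^ (2 ^ n)) := by ring
          _ = Cf * (c * K) ^ (2 ^ n) := by rw [mul_pow, ← hcc]
      exact absurd hn (not_lt.mpr (h2.trans h3))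
    have hsq : ‖β f‖ ^ 2 ≤ K * c ^ 2 := by
      calc ‖β f‖ ^ 2 ≤ c * ‖γ 1 f‖ := hβsq f
        _ ≤ c * (c * K) := mul_le_mul_of_nonneg_left hmain hc
        _ = K * c ^ 2 := by ring
    calc ‖β f‖ = Real.sqrt (‖β f‖ ^ 2) := (Real.sqrt_sq (norm_nonneg _)).symm
      _ ≤ Real.sqrt (K * c ^ 2) := Real.sqrt_le_sqrt hsq
      _ = Real.sqrt K * c := by rw [Real.sqrt_mul hK, Real.sqrt_sq hc]
  -- construct the map on the range of α
  have hker : LinearMap.ker α ≤ LinearMap.ker β := by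
    intro f hf
    rw [LinearMap.mem_ker] at hf ⊢
    have hb := hβbound f
    rw [hf, norm_zero, mul_zero] at hb
    exact norm_le_zero_iff.mp hb
  set R₀ : ↥(LinearMap.range α) →ₗ[ℂ] Z :=
    ((LinearMap.ker α).liftQ β hker).comp
      (LinearMap.quotKerEquivRange α).symm.toLinearMap with hR₀def
  have hR₀ : ∀ (f : X × B →₀ ℂ) (hf : α f ∈ LinearMap.range α), R₀ ⟨α f, hf⟩ = β f := by
    intro f hf
    have e1 : (LinearMap.quotKerEquivRange α) (Submodule.Quotient.mk f) = ⟨α f, hf⟩ :=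
      Subtype.ext (α.quotKerEquivRange_apply_mk f)
    have e2 : (LinearMap.quotKerEquivRange α).symm ⟨α f, hf⟩ = Submodule.Quotient.mk f := by
      rw [← e1, LinearEquiv.symm_apply_apply]
    show ((LinearMap.ker α).liftQ β hker) ((LinearMap.quotKerEquivRange α).symm ⟨α f, hf⟩) = β f
    rw [e2, Submodule.liftQ_apply]
  have hR₀bound : ∀ d : ↥(LinearMap.range α), ‖R₀ d‖ ≤ Real.sqrt K * ‖d‖ := by
    rintro ⟨w, hw⟩
    obtain ⟨f, rfl⟩ := hw
    rw [hR₀ f (LinearMap.mem_range_self α f)]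
    exact hβbound f
  set R₀c : ↥(LinearMap.range α) →L[ℂ] Z := R₀.mkContinuous (Real.sqrt K) hR₀bound with hR₀cdef
  set e : ↥(LinearMap.range α) →L[ℂ] W := (LinearMap.range α).subtypeL with hedef
  have hdense : DenseRange e := by
    have h1 : Set.range ⇑e = ((LinearMap.range α : Submodule ℂ W) : Set W) := by
      ext w
      constructor
      · rintro ⟨d, rfl⟩
        exact d.2
      · intro hw
        exact ⟨⟨w, hw⟩, rfl⟩
    have h2 : LinearMap.range α =
        Submodule.span ℂ (Set.range (fun p : X × B => (p.1 : W) <• p.2)) := by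
      rw [hαdef]
      exact Finsupp.range_linearCombination ..
    have h3 : Set.range (fun p : X × B => (p.1 : W) <• p.2)
        = {w : W | ∃ x ∈ X, ∃ b : B, w = x <• b} := by
      ext w
      constructor
      · rintro ⟨⟨x, b⟩, rfl⟩
        exact ⟨x, x.2, b, rfl⟩
      · rintro ⟨x, hx, b, rfl⟩
        exact ⟨(⟨x, hx⟩, b), rfl⟩
    show Dense (Set.range ⇑e)
    rw [dense_iff_closure_eq, h1, h2, h3, hXgen]
  have h_e : ∀ x : ↥(LinearMap.range α), ‖x‖ ≤ (1 : NNReal) * ‖e x‖ := fun x => by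
    rw [NNReal.coe_one, one_mul]
    exact le_of_eq rfl
  set R : W →L[ℂ] Z :=
    R₀c.extend e
    with hRdef
  have hRnorm : ‖R‖ ≤ Real.sqrt K := by
    have h1 := R₀c.opNorm_extend_le hdense h_e
    have h2 : ‖R₀c‖ ≤ Real.sqrt K :=
      R₀.mkContinuous_norm_le (Real.sqrt_nonneg K) hR₀bound
    calc ‖R‖ ≤ (1 : NNReal) * ‖R₀c‖ := h1
      _ = ‖R₀c‖ := by rw [NNReal.coe_one, one_mul]
      _ ≤ Real.sqrt K := h2
  have hadj : ∀ (w : W) (y : Y), ⟪R w, (y : Z)⟫_B = ⟪w, ((S y : X) : W)⟫_B := by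
    intro w y
    have hβy : ∀ f : X × B →₀ ℂ, ⟪β f, (y : Z)⟫_B = ⟪α f, ((S y : X) : W)⟫_B := by
      intro f
      rw [hβdef, hαdef]
      simp only [Finsupp.linearCombination_apply, Finsupp.sum, CStarModuleRight.inner_sum_left,
        CStarModuleRight.inner_smul_left_complex, CStarModuleRight.inner_op_smul_left]
      refine Finset.sum_congr rfl fun p _ => ?_
      rw [h p.1 y]
    refine isClosed_property hdense
      (p := fun w : W => ⟪R w, (y : Z)⟫_B = ⟪w, ((S y : X) : W)⟫_B) ?_ ?_ w
    · apply isClosed_eq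
      · exact CStarModuleRight.continuous_inner.comp (R.continuous.prodMk continuous_const)
      · exact CStarModuleRight.continuous_inner.comp (continuous_id.prodMk continuous_const)
    · rintro ⟨w', hw'⟩
      rw [ContinuousLinearMap.extend_eq _ hdense
          (ContinuousLinearMap.isUniformEmbedding_of_bound e h_e).isUniformInducing]
      obtain ⟨f, rfl⟩ := hw'
      show ⟪R₀ ⟨α f, LinearMap.mem_range_self α f⟩, (y : Z)⟫_B = _
      rw [hR₀ f (LinearMap.mem_range_self α f)]
      exact hβy f
  refine ⟨R, hadj, ?_⟩
  rw [← hKdef]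
  exact hRnorm

end Helpers

theorem adjointable_extends_to_adjointable_module_map
    {B W Z : Type*}
    [NonUnitalCStarAlgebra B] [PartialOrder B] [StarOrderedRing B]
    [NormedAddCommGroup W] [NormedSpace ℂ W] [SMul Bᵐᵒᵖ W] [CStarModuleRight B W]
    [CompleteSpace W]
    [NormedAddCommGroup Z] [NormedSpace ℂ Z] [SMul Bᵐᵒᵖ Z] [CStarModuleRight B Z]
    [CompleteSpace Z]
    (X : Submodule ℂ W) (hX : IsClosed (X : Set W))
    (Y : Submodule ℂ Z) (hY : IsClosed (Y : Set Z))
    (hXgen : closure (Submodule.span ℂ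
      {w : W | ∃ x ∈ X, ∃ b : B, w = x <• b} : Set W) = Set.univ)
    (hYgen : closure (Submodule.span ℂ
      {z : Z | ∃ y ∈ Y, ∃ b : B, z = y <• b} : Set Z) = Set.univ)
    (T : X →ₗ[ℂ] Y) (S : Y →ₗ[ℂ] X)
    (h : ∀ (x : X) (y : Y), ⟪(T x : Z), (y : Z)⟫_B = ⟪(x : W), (S y : W)⟫_B) :
    ∃ (R : W →ₗ[ℂ] Z) (R' : Z →ₗ[ℂ] W),
      (∀ (w : W) (b : B), R (w <• b) = R w <• b) ∧
      (∀ (z : Z) (b : B), R' (z <• b) = R' z <• b) ∧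
      (∃ M : ℝ, ∀ w : W, ‖R w‖ ≤ M * ‖w‖) ∧
      (∃ M : ℝ, ∀ z : Z, ‖R' z‖ ≤ M * ‖z‖) ∧
      (∀ x : X, R x = T x) ∧
      (∀ y : Y, R' y = S y) ∧
      (∀ (w : W) (z : Z), ⟪R w, z⟫_B = ⟪w, R' z⟫_B) ∧
      supNormOnBall (⇑R) = supNormOnBall (fun x : X => (T x : Z)) ∧
      supNormOnBall (⇑R') = supNormOnBall (fun y : Y => (S y : W)) := by
  -- the reversed adjoint relation
  have h' : ∀ (y : Y) (x : X), ⟪(S y : W), (x : W)⟫_B = ⟪(y : Z), (T x : Z)⟫_B := by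
    intro y x
    calc ⟪(S y : W), (x : W)⟫_B = star ⟪(x : W), (S y : W)⟫_B :=
          (CStarModuleRight.star_inner _ _).symm
      _ = star ⟪(T x : Z), (y : Z)⟫_B := by rw [h x y]
      _ = ⟪(y : Z), (T x : Z)⟫_B := CStarModuleRight.star_inner _ _
  -- continuity of T and S via the closed graph theorem
  have hTcont : Continuous T := continuous_of_formal_adjoint X hX Y hY hYgen T S h
  have hScont : Continuous S := continuous_of_formal_adjoint Y hY X hX hXgen S T h'
  set Tc : X →L[ℂ] Y := ⟨T, hTcont⟩ with hTcdef
  set Sc : Y →L[ℂ] X := ⟨S, hScont⟩ with hScdef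
  -- the two extensions
  obtain ⟨R, hR, hRnorm⟩ := exists_extension X Y hXgen T S h ‖Tc‖ ‖Sc‖
    (norm_nonneg Tc) (norm_nonneg Sc) (fun x => Tc.le_opNorm x) (fun y => Sc.le_opNorm y)
  obtain ⟨R', hR', hR'norm⟩ := exists_extension Y X hYgen S T h' ‖Sc‖ ‖Tc‖
    (norm_nonneg Sc) (norm_nonneg Tc) (fun y => Sc.le_opNorm y) (fun x => Tc.le_opNorm x)
  -- R extends T, R' extends S
  have hRX : ∀ x : X, R (x : W) = (T x : Z) := by
    intro x
    refine sub_eq_zero.mp (orth Y hYgen _ fun y => ?_)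
    rw [CStarModuleRight.inner_sub_left, hR, ← h x y, sub_self]
  have hR'Y : ∀ y : Y, R' (y : Z) = (S y : W) := by
    intro y
    refine sub_eq_zero.mp (orth X hXgen _ fun x => ?_)
    rw [CStarModuleRight.inner_sub_left, hR', ← h' y x, sub_self]
  -- module map properties
  have hRmod : ∀ (w : W) (b : B), R (w <• b) = R w <• b := by
    intro w b
    refine sub_eq_zero.mp (orth Y hYgen _ fun y => ?_)
    rw [CStarModuleRight.inner_sub_left, hR, CStarModuleRight.inner_op_smul_left,
      CStarModuleRight.inner_op_smul_left, hR w y, sub_self]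
  have hR'mod : ∀ (z : Z) (b : B), R' (z <• b) = R' z <• b := by
    intro z b
    refine sub_eq_zero.mp (orth X hXgen _ fun x => ?_)
    rw [CStarModuleRight.inner_sub_left, hR', CStarModuleRight.inner_op_smul_left,
      CStarModuleRight.inner_op_smul_left, hR' z x, sub_self]
  -- adjoint relation
  have hadj : ∀ (w : W) (z : Z), ⟪R w, z⟫_B = ⟪w, R' z⟫_B := by
    intro w z
    have hd : Dense (Submodule.span ℂ {z : Z | ∃ y ∈ Y, ∃ b : B, z = y <• b} : Set Z) :=
      dense_iff_closure_eq.mpr hYgen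
    have heq : (CStarModuleRight.innerSL (A := B) (R w) : Z →L[ℂ] B)
        = ((CStarModuleRight.innerSL (A := B) w).comp R' : Z →L[ℂ] B) := by
      refine ContinuousLinearMap.ext_on hd ?_
      rintro z' ⟨y', hy', b, rfl⟩
      show ⟪R w, ((⟨y', hy'⟩ : Y) : Z) <• b⟫_B = ⟪w, R' (((⟨y', hy'⟩ : Y) : Z) <• b)⟫_B
      calc ⟪R w, ((⟨y', hy'⟩ : Y) : Z) <• b⟫_B
          = ⟪R w, ((⟨y', hy'⟩ : Y) : Z)⟫_B * b := CStarModuleRight.inner_op_smul_right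
        _ = ⟪w, ((S ⟨y', hy'⟩ : X) : W)⟫_B * b := by rw [hR w ⟨y', hy'⟩]
        _ = ⟪w, R' ((⟨y', hy'⟩ : Y) : Z)⟫_B * b := by rw [hR'Y ⟨y', hy'⟩]
        _ = ⟪w, R' ((⟨y', hy'⟩ : Y) : Z) <• b⟫_B := CStarModuleRight.inner_op_smul_right.symm
        _ = ⟪w, R' (((⟨y', hy'⟩ : Y) : Z) <• b)⟫_B := by rw [hR'mod]
    exact DFunLike.congr_fun heq z
  -- norm identifications
  have eT : supNormOnBall (fun x : X => ((T x : Y) : Z)) = ‖Tc‖ := by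
    rw [← supNormOnBall_clm Tc]
    unfold supNormOnBall
    congr 1
  have eS : supNormOnBall (fun y : Y => ((S y : X) : W)) = ‖Sc‖ := by
    rw [← supNormOnBall_clm Sc]
    unfold supNormOnBall
    congr 1
  have f1 : ‖Tc‖ ≤ ‖R‖ := by
    refine Tc.opNorm_le_bound (norm_nonneg R) fun x => ?_
    have e : ‖Tc x‖ = ‖R (x : W)‖ := by
      rw [hRX x]
      exact Submodule.coe_norm _
    rw [e]
    exact R.le_opNorm _
  have f2 : ‖Sc‖ ≤ ‖R'‖ := by
    refine Sc.opNorm_le_bound (norm_nonneg R') fun y => ?_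
    have e : ‖Sc y‖ = ‖R' (y : Z)‖ := by
      rw [hR'Y y]
      exact Submodule.coe_norm _
    rw [e]
    exact R'.le_opNorm _
  have ht0 : (0 : ℝ) ≤ ‖Tc‖ := norm_nonneg Tc
  have hs0 : (0 : ℝ) ≤ ‖Sc‖ := norm_nonneg Sc
  have hsq1 : Real.sqrt (‖Tc‖ * ‖Sc‖) ^ 2 = ‖Tc‖ * ‖Sc‖ := Real.sq_sqrt (by positivity)
  have hsq2 : Real.sqrt (‖Sc‖ * ‖Tc‖) ^ 2 = ‖Sc‖ * ‖Tc‖ := Real.sq_sqrt (by positivity)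
  have hts : ‖Tc‖ = ‖Sc‖ := by
    have h1 : ‖Tc‖ ≤ Real.sqrt (‖Tc‖ * ‖Sc‖) := f1.trans hRnorm
    have h2 : ‖Sc‖ ≤ Real.sqrt (‖Sc‖ * ‖Tc‖) := f2.trans hR'norm
    have h3 : ‖Tc‖ * ‖Tc‖ ≤ ‖Tc‖ * ‖Sc‖ := by
      have h30 := pow_le_pow_left₀ ht0 h1 2
      rw [hsq1, pow_two] at h30
      exact h30
    have h4 : ‖Sc‖ * ‖Sc‖ ≤ ‖Sc‖ * ‖Tc‖ := by
      have h40 := pow_le_pow_left₀ hs0 h2 2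
      rw [hsq2, pow_two] at h40
      exact h40
    have h5 : ‖Tc‖ ≤ ‖Sc‖ := by
      rcases eq_or_lt_of_le ht0 with h0 | h0
      · rw [← h0]; exact hs0
      · exact le_of_mul_le_mul_left h3 h0
    have h6 : ‖Sc‖ ≤ ‖Tc‖ := by
      rcases eq_or_lt_of_le hs0 with h0 | h0
      · rw [← h0]; exact ht0
      · exact le_of_mul_le_mul_left h4 h0
    exact le_antisymm h5 h6
  have hRn : ‖R‖ = ‖Tc‖ := by
    refine le_antisymm (hRnorm.trans (le_of_eq ?_)) f1
    rw [← hts, Real.sqrt_mul_self ht0]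
  have hR'n : ‖R'‖ = ‖Sc‖ := by
    refine le_antisymm (hR'norm.trans (le_of_eq ?_)) f2
    rw [hts, Real.sqrt_mul_self hs0]
  refine ⟨R.toLinearMap, R'.toLinearMap, hRmod, hR'mod,
    ⟨‖R‖, fun w => R.le_opNorm w⟩, ⟨‖R'‖, fun z => R'.le_opNorm z⟩,
    hRX, hR'Y, hadj, ?_, ?_⟩
  · calc supNormOnBall ⇑(R.toLinearMap) = ‖R‖ := supNormOnBall_clm R
      _ = ‖Tc‖ := hRn
      _ = supNormOnBall (fun x : X => ((T x : Y) : Z)) := eT.symm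
  · calc supNormOnBall ⇑(R'.toLinearMap) = ‖R'‖ := supNormOnBall_clm R'
      _ = ‖Sc‖ := hR'n
      _ = supNormOnBall (fun y : Y => ((S y : X) : W)) := eS.symm
end

section
/- Let B be a C*-algebra, let W and Z be Hilbert C*-modules over B, let X ⊆ W and Y ⊆ Z be closed ℂ-linear subspaces such that the closed linear span of {x·b : x ∈ X, b ∈ B} equals W and the closed linear span of {y·b : y ∈ Y, b ∈ B} equals Z, and let T : X → Y, S : Y → X be bounded ℂ-linear maps satisfying ⟨T(x) | y⟩ = ⟨x | S(y)⟩ for all x ∈ X, y ∈ Y. Then ‖S ∘ T‖ = ‖T‖² and ‖S‖ = ‖T‖, where all norms are operator norms of bounded linear maps between the normed spaces X and Y. -/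
open scoped InnerProductSpace RightActions

section RCMHelpers

variable {A E : Type*} [NonUnitalCStarAlgebra A] [PartialOrder A]
  [NormedAddCommGroup E] [NormedSpace ℂ E] [SMul Aᵐᵒᵖ E] [RightCStarModule A E]

theorem rcm_inner_add_left {x y z : E} : inner A (x + y) z = inner A x z + inner A y z := by
  rw [← star_star (inner A (x + y) z), RightCStarModule.star_inner,
    RightCStarModule.inner_add_right, star_add, RightCStarModule.star_inner,
    RightCStarModule.star_inner]

theorem rcm_inner_sub_right {x y z : E} : inner A x (y - z) = inner A x y - inner A x z := by
  have := RightCStarModule.inner_add_right (A := A) (x := x) (y := y - z) (z := z)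
  rw [sub_add_cancel] at this
  exact eq_sub_of_add_eq this.symm

theorem rcm_inner_sub_left {x y z : E} : inner A (x - y) z = inner A x z - inner A y z := by
  have := rcm_inner_add_left (A := A) (x := x - y) (y := y) (z := z)
  rw [sub_add_cancel] at this
  exact eq_sub_of_add_eq this.symm

theorem rcm_inner_zero_right {x : E} : inner A x (0 : E) = 0 := by
  have := RightCStarModule.inner_add_right (A := A) (x := x) (y := (0 : E)) (z := (0 : E))
  rw [add_zero] at this
  simpa using this

theorem rcm_inner_zero_left {x : E} : inner A (0 : E) x = 0 := by
  rw [← RightCStarModule.star_inner x (0 : E), rcm_inner_zero_right, star_zero]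

theorem rcm_inner_op_smul_left {a : A} {x y : E} : inner A (x <• a) y = star a * inner A x y := by
  rw [← RightCStarModule.star_inner y (x <• a), RightCStarModule.inner_op_smul_right, star_mul,
    RightCStarModule.star_inner]

theorem rcm_inner_smul_right_real {z : ℝ} {x y : E} : inner A x (z • y) = z • inner A x y := by
  have h₁ : z • y = (z : ℂ) • y := by simp
  rw [h₁, RightCStarModule.inner_smul_right_complex]
  simp

theorem rcm_inner_smul_left_real {z : ℝ} {x y : E} : inner A (z • x) y = z • inner A x y := by
  rw [← RightCStarModule.star_inner y (z • x), rcm_inner_smul_right_real, star_smul,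
    RightCStarModule.star_inner]
  simp

theorem rcm_norm_sq_eq {x : E} : ‖x‖ ^ 2 = ‖inner A x x‖ := by
  rw [RightCStarModule.norm_eq_sqrt_norm_inner_self (A := A) x, Real.sq_sqrt (norm_nonneg _)]

theorem rcm_norm_pos {x : E} (hx : x ≠ 0) : 0 < ‖x‖ := norm_pos_iff.mpr hx

variable [StarOrderedRing A]

theorem rcm_inner_mul_inner_swap_le {x y : E} :
    inner A y x * inner A x y ≤ ‖x‖ ^ 2 • inner A y y := by
  rcases eq_or_ne x 0 with h | h
  · simp [h, rcm_inner_zero_right, rcm_inner_zero_left]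
  · have h₁ : ∀ (a : A),
        (0 : A) ≤ ‖x‖ ^ 2 • (star a * a) - ‖x‖ ^ 2 • (star a * inner A x y)
                  - ‖x‖ ^ 2 • (inner A y x * a) + ‖x‖ ^ 2 • (‖x‖ ^ 2 • inner A y y) := fun a => by
      calc (0 : A) ≤ inner A (x <• a - ‖x‖ ^ 2 • y) (x <• a - ‖x‖ ^ 2 • y) := by
                      exact RightCStarModule.inner_self_nonneg
            _ = star a * inner A x x * a - ‖x‖ ^ 2 • (star a * inner A x y)
                  - ‖x‖ ^ 2 • (inner A y x * a) + ‖x‖ ^ 2 • (‖x‖ ^ 2 • inner A y y) := by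
                      simp only [rcm_inner_sub_right, RightCStarModule.inner_op_smul_right,
                        rcm_inner_sub_left, rcm_inner_op_smul_left, rcm_inner_smul_left_real,
                        rcm_inner_smul_right_real, mul_sub, sub_mul, smul_sub, mul_smul_comm,
                        smul_mul_assoc, mul_assoc]
                      abel
            _ ≤ ‖x‖ ^ 2 • (star a * a) - ‖x‖ ^ 2 • (star a * inner A x y)
                  - ‖x‖ ^ 2 • (inner A y x * a) + ‖x‖ ^ 2 • (‖x‖ ^ 2 • inner A y y) := by
                      gcongr
                      calc _ ≤ ‖inner A x x‖ • (star a * a) :=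
                          CStarAlgebra.star_left_conjugate_le_norm_smul
                            (RightCStarModule.star_inner x x)
                        _ = ‖x‖ ^ 2 • (star a * a) := by rw [rcm_norm_sq_eq (A := A)]
    specialize h₁ (inner A x y)
    simp only [RightCStarModule.star_inner, sub_self, zero_sub, le_neg_add_iff_add_le,
      add_zero] at h₁
    rwa [smul_le_smul_iff_of_pos_left (pow_pos (rcm_norm_pos h) _)] at h₁

variable (E) in
theorem rcm_norm_inner_le {x y : E} : ‖inner A x y‖ ≤ ‖x‖ * ‖y‖ := by
  have := calc ‖inner A x y‖ ^ 2 = ‖inner A y x * inner A x y‖ := by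
                rw [← RightCStarModule.star_inner x y, CStarRing.norm_star_mul_self, pow_two]
    _ ≤ ‖‖x‖ ^ 2 • inner A y y‖ := by
                refine CStarAlgebra.norm_le_norm_of_nonneg_of_le ?_ rcm_inner_mul_inner_swap_le
                rw [← RightCStarModule.star_inner x y]
                exact star_mul_self_nonneg (inner A x y)
    _ = ‖x‖ ^ 2 * ‖inner A y y‖ := by simp [norm_smul]
    _ = ‖x‖ ^ 2 * ‖y‖ ^ 2 := by rw [rcm_norm_sq_eq (A := A) (x := y)]
    _ = (‖x‖ * ‖y‖) ^ 2 := by simp only [mul_pow]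
  exact (pow_le_pow_iff_left₀ (norm_nonneg (inner A x y)) (by positivity) (by simp)).mp this

end RCMHelpers

theorem norm_adjoint_comp_self_and_norm_adjoint
    {B W Z : Type*}
    [NonUnitalCStarAlgebra B] [PartialOrder B] [StarOrderedRing B]
    [NormedAddCommGroup W] [NormedSpace ℂ W] [SMul Bᵐᵒᵖ W] [RightCStarModule B W]
    [CompleteSpace W]
    [NormedAddCommGroup Z] [NormedSpace ℂ Z] [SMul Bᵐᵒᵖ Z] [RightCStarModule B Z]
    [CompleteSpace Z]
    (X : Submodule ℂ W) (hX : IsClosed (X : Set W))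
    (Y : Submodule ℂ Z) (hY : IsClosed (Y : Set Z))
    (hXgen : closure (Submodule.span ℂ
      {w : W | ∃ x ∈ X, ∃ b : B, w = x <• b} : Set W) = Set.univ)
    (hYgen : closure (Submodule.span ℂ
      {z : Z | ∃ y ∈ Y, ∃ b : B, z = y <• b} : Set Z) = Set.univ)
    (T : X →L[ℂ] Y) (S : Y →L[ℂ] X)
    (h : ∀ (x : X) (y : Y), ⟪(T x : Z), (y : Z)⟫_B = ⟪(x : W), (S y : W)⟫_B) :
    ‖S.comp T‖ = ‖T‖ ^ 2 ∧ ‖S‖ = ‖T‖ := by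
  have hST : ‖S‖ ≤ ‖T‖ := by
    refine S.opNorm_le_bound (norm_nonneg T) fun y => ?_
    have hsq : ‖S y‖ ^ 2 ≤ ‖T‖ * ‖y‖ * ‖S y‖ := by
      calc ‖S y‖ ^ 2 = ‖(S y : W)‖ ^ 2 := rfl
        _ = ‖⟪(S y : W), (S y : W)⟫_B‖ := rcm_norm_sq_eq
        _ = ‖⟪(T (S y) : Z), (y : Z)⟫_B‖ := by rw [h]
        _ ≤ ‖(T (S y) : Z)‖ * ‖(y : Z)‖ := rcm_norm_inner_le Z
        _ = ‖T (S y)‖ * ‖y‖ := rfl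
        _ ≤ (‖T‖ * ‖S y‖) * ‖y‖ := by gcongr; exact T.le_opNorm _
        _ = ‖T‖ * ‖y‖ * ‖S y‖ := by ring
    rcases eq_or_lt_of_le (norm_nonneg (S y)) with h0 | h0
    · rw [← h0]; positivity
    · nlinarith [hsq]
  have hTS : ‖T‖ ≤ ‖S‖ := by
    refine T.opNorm_le_bound (norm_nonneg S) fun x => ?_
    have hsq : ‖T x‖ ^ 2 ≤ ‖S‖ * ‖x‖ * ‖T x‖ := by
      calc ‖T x‖ ^ 2 = ‖(T x : Z)‖ ^ 2 := rfl
        _ = ‖⟪(T x : Z), (T x : Z)⟫_B‖ := rcm_norm_sq_eq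
        _ = ‖⟪(x : W), (S (T x) : W)⟫_B‖ := by rw [h]
        _ ≤ ‖(x : W)‖ * ‖(S (T x) : W)‖ := rcm_norm_inner_le W
        _ = ‖x‖ * ‖S (T x)‖ := rfl
        _ ≤ ‖x‖ * (‖S‖ * ‖T x‖) := by gcongr; exact S.le_opNorm _
        _ = ‖S‖ * ‖x‖ * ‖T x‖ := by ring
    rcases eq_or_lt_of_le (norm_nonneg (T x)) with h0 | h0
    · rw [← h0]; positivity
    · nlinarith [hsq]
  have hSeqT : ‖S‖ = ‖T‖ := le_antisymm hST hTS
  have h1 : ‖S.comp T‖ ≤ ‖T‖ ^ 2 := by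
    calc ‖S.comp T‖ ≤ ‖S‖ * ‖T‖ := ContinuousLinearMap.opNorm_comp_le S T
      _ = ‖T‖ ^ 2 := by rw [hSeqT]; ring
  have h2 : ‖T‖ ^ 2 ≤ ‖S.comp T‖ := by
    have hTle : ‖T‖ ≤ Real.sqrt ‖S.comp T‖ := by
      refine T.opNorm_le_bound (Real.sqrt_nonneg _) fun x => ?_
      have hsq : ‖T x‖ ^ 2 ≤ ‖S.comp T‖ * ‖x‖ ^ 2 := by
        calc ‖T x‖ ^ 2 = ‖(T x : Z)‖ ^ 2 := rfl
          _ = ‖⟪(T x : Z), (T x : Z)⟫_B‖ := rcm_norm_sq_eq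
          _ = ‖⟪(x : W), (S (T x) : W)⟫_B‖ := by rw [h]
          _ ≤ ‖(x : W)‖ * ‖(S (T x) : W)‖ := rcm_norm_inner_le W
          _ = ‖x‖ * ‖S.comp T x‖ := rfl
          _ ≤ ‖x‖ * (‖S.comp T‖ * ‖x‖) := by gcongr; exact (S.comp T).le_opNorm _
          _ = ‖S.comp T‖ * ‖x‖ ^ 2 := by ring
      nlinarith [Real.sq_sqrt (norm_nonneg (S.comp T)), Real.sqrt_nonneg ‖S.comp T‖,
        norm_nonneg (T x), norm_nonneg x, mul_nonneg (Real.sqrt_nonneg ‖S.comp T‖) (norm_nonneg x)]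
    nlinarith [Real.sq_sqrt (norm_nonneg (S.comp T)), norm_nonneg T, Real.sqrt_nonneg ‖S.comp T‖]
  exact ⟨le_antisymm h1 h2, hSeqT⟩
end
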